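/- For any causal realisation ρ of a family of configurations F there exist an extremal realisation ρ' of F and a total map of realisations f : ρ → ρ'. -/

import Mathlib

universe u v w

/-- The image of a set under a partial function. -/
def pimage {α : Type u} {β : Type v} (f : α → Option β) (x : Set α) : Set β :=
  {b | ∃ a ∈ x, f a = some b}

/-- A family of configurations over the set of events `A`:
a non-empty family of subsets, whose underlying set is all of `A`,
closed under unions of finitely compatible subfamilies,
and satisfying the securing-chain condition. -/
structure ConfigFamily (A : Type u) where
  F : Set (Set A)
  nonempty : F.Nonempty
  covers : ∀ a : A, ∃ x ∈ F, a ∈ x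
  unionClosed : ∀ X ⊆ F, (∀ Y ⊆ X, Y.Finite → ∃ z ∈ F, ∀ y ∈ Y, y ⊆ z) → ⋃₀ X ∈ F
  secured : ∀ x ∈ F, ∀ e ∈ x, ∃ l : List A, l ≠ [] ∧ l.getLast? = some e ∧
    (∀ a ∈ l, a ∈ x) ∧ ∀ i, 0 < i → i ≤ l.length → {a | a ∈ l.take i} ∈ F

/-- A causal realisation of the family `C`: a partial order whose
principal lower sets are finite, together with a function to events
sending every down-closed subset to a configuration of the family. -/
structure Realisation {A : Type u} (C : ConfigFamily A) where
  carrier : Type u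
  le : carrier → carrier → Prop
  le_refl : ∀ a, le a a
  le_trans : ∀ a b c, le a b → le b c → le a c
  le_antisymm : ∀ a b, le a b → le b a → a = b
  finPast : ∀ e, {e' | le e' e}.Finite
  ρ : carrier → A
  real : ∀ x : Set carrier, (∀ a ∈ x, ∀ b, le b a → b ∈ x) → ρ '' x ∈ C.F

namespace Realisation

variable {A : Type u} {C : ConfigFamily A}

/-- Down-closed subsets of the carrier of a realisation. -/
def IsDown (r : Realisation C) (x : Set r.carrier) : Prop :=
  ∀ a ∈ x, ∀ b, r.le b a → b ∈ x

/-- The set `[a) = [a] \ {a}` of strict predecessors. -/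
def spred (r : Realisation C) (a : r.carrier) : Set r.carrier :=
  {b | r.le b a ∧ b ≠ a}

/-- The carrier has a top element. -/
def HasTop (r : Realisation C) : Prop := ∃ t, ∀ a, r.le a t

end Realisation

/-- A map of realisations: a partial surjective function between the carriers,
preserving down-closed subsets and commuting with the functions to events. -/
structure RealMap {A : Type u} {C : ConfigFamily A} (r r' : Realisation C) where
  f : r.carrier → Option r'.carrier
  surj : ∀ b, ∃ a, f a = some b
  presDown : ∀ x, r.IsDown x → r'.IsDown (pimage f x)
  commutes : ∀ a b, f a = some b → r.ρ a = r'.ρ b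

namespace RealMap

variable {A : Type u} {C : ConfigFamily A} {r r' r₀ : Realisation C}

/-- The map is total. -/
def IsTotal (m : RealMap r r') : Prop := ∀ a, ∃ b, m.f a = some b

/-- The map is an isomorphism of realisations: it has an inverse map of
realisations, given by the inverse relation. -/
def IsIso (m : RealMap r r') : Prop :=
  ∃ m' : RealMap r' r, ∀ a b, m.f a = some b ↔ m'.f b = some a

/-- `m : r → r₀` is a projection witnessed by `g`: `g` realises the carrier of
`r₀` as a subset of the carrier of `r` with the restricted order and restricted
function to events, and `m` is the inverse relation of this inclusion. -/
def IsProjectionVia (m : RealMap r r₀) (g : r₀.carrier → r.carrier) : Prop :=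
  Function.Injective g ∧ (∀ a b, r₀.le a b ↔ r.le (g a) (g b)) ∧
    (∀ a, r₀.ρ a = r.ρ (g a)) ∧ (∀ a b, m.f a = some b ↔ g b = a)

/-- `m` is a projection. -/
def IsProjection (m : RealMap r r₀) : Prop := ∃ g, m.IsProjectionVia g

end RealMap

/-- A realisation is extremal when every total map of realisations from it
is an isomorphism. -/
def Realisation.Extremal {A : Type u} {C : ConfigFamily A} (r : Realisation C) : Prop :=
  ∀ (r' : Realisation C) (m : RealMap r r'), m.IsTotal → m.IsIso

/-- A prime extremal realisation: extremal with a top element. -/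
def Realisation.PrimeExtremal {A : Type u} {C : ConfigFamily A} (r : Realisation C) : Prop :=
  r.Extremal ∧ r.HasTop

/-- Isomorphism of realisations. -/
def RealIso {A : Type u} {C : ConfigFamily A} (r r' : Realisation C) : Prop :=
  ∃ m : RealMap r r', m.IsIso

/-- `m` is the composite of `m₁` followed by `m₂` (as partial functions). -/
def CompEq {A : Type u} {C : ConfigFamily A} {r r' r'' : Realisation C}
    (m₁ : RealMap r r') (m₂ : RealMap r' r'') (m : RealMap r r'') : Prop :=
  ∀ a c, m.f a = some c ↔ ∃ b, m₁.f a = some b ∧ m₂.f b = some c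

/-! ### Coarsenings -/

namespace Extremal

variable {A : Type u} {C : ConfigFamily A}

/-- A coarsening of a realisation `r`: a "preorder" on the carrier whose quotient
(by its symmetric part) carries a realisation structure making the quotient map a
total map of realisations. -/
structure Coars (r : Realisation C) where
  R : r.carrier → r.carrier → Prop
  refl : ∀ a, R a a
  trans : ∀ a b c, R a b → R b c → R a c
  rho : ∀ a b, R a b → R b a → r.ρ a = r.ρ b
  fin : ∀ b, ((fun x => {y | R x y ∧ R y x}) '' {a | R a b}).Finite
  pres : ∀ X, r.IsDown X → ∀ a ∈ X, ∀ b, R b a → ∃ x ∈ X, R x b ∧ R b x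
  real : ∀ Y : Set r.carrier, (∀ a ∈ Y, ∀ b, R b a → b ∈ Y) → r.ρ '' Y ∈ C.F

variable {r : Realisation C}

/-- The equivalence class of `x` under the symmetric part of `S`. -/
def cls (S : Coars r) (x : r.carrier) : Set r.carrier := {y | S.R x y ∧ S.R y x}

lemma cls_eq_iff (S : Coars r) {x y : r.carrier} :
    cls S x = cls S y ↔ (S.R x y ∧ S.R y x) := by
  constructor
  · intro h
    have hx : x ∈ cls S x := ⟨S.refl x, S.refl x⟩
    rw [h] at hx
    exact ⟨hx.2, hx.1⟩
  · intro h
    ext z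
    constructor
    · rintro ⟨h1, h2⟩
      exact ⟨S.trans _ _ _ h.2 h1, S.trans _ _ _ h2 h.1⟩
    · rintro ⟨h1, h2⟩
      exact ⟨S.trans _ _ _ h.1 h1, S.trans _ _ _ h2 h.2⟩

/-- Order on coarsenings: the symmetric part grows, and saturated down-closed sets
transfer (this says precisely that the induced map between quotients is a map of
realisations). -/
def CLE (S T : Coars r) : Prop :=
  (∀ a b, S.R a b → S.R b a → T.R a b) ∧
  (∀ X : Set r.carrier, (∀ a ∈ X, ∀ b, S.R b a → b ∈ X) →
    ∀ a ∈ X, ∀ b, T.R b a → ∃ x ∈ X, T.R x b ∧ T.R b x)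

lemma CLE.refl (S : Coars r) : CLE S S := by
  refine ⟨fun a b h _ => h, fun X hX a ha b hba => ⟨b, hX a ha b hba, S.refl b, S.refl b⟩⟩

lemma CLE.trans {S T U : Coars r} (h1 : CLE S T) (h2 : CLE T U) : CLE S U := by
  constructor
  · intro a b hab hba
    exact h2.1 a b (h1.1 a b hab hba) (h1.1 b a hba hab)
  · intro X hX a ha b hba
    -- saturate X under T's equivalence
    set X2 : Set r.carrier := {y | ∃ x ∈ X, T.R x y ∧ T.R y x} with hX2def
    have hX2 : ∀ a ∈ X2, ∀ b, T.R b a → b ∈ X2 := by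
      rintro y ⟨x, hx, hxy, hyx⟩ z hzy
      have : T.R z x := T.trans _ _ _ hzy hyx
      obtain ⟨x', hx', h1', h2'⟩ := h1.2 X hX x hx z this
      exact ⟨x', hx', h1', h2'⟩
    have haX2 : a ∈ X2 := ⟨a, ha, T.refl a, T.refl a⟩
    obtain ⟨y, hy, h1', h2'⟩ := h2.2 X2 hX2 a haX2 b hba
    obtain ⟨x, hx, hxy, hyx⟩ := hy
    have hxT : U.R x b := U.trans _ _ _ (h2.1 _ _ hxy hyx) h1'
    have hTx : U.R b x := U.trans _ _ _ h2' (h2.1 _ _ hyx hxy)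
    exact ⟨x, hx, hxT, hTx⟩

/-- Lifting predecessors along `CLE`. -/
lemma CLE.lift {S T : Coars r} (h : CLE S T) {b y : r.carrier} (hyb : T.R y b) :
    ∃ y₀, S.R y₀ b ∧ T.R y₀ y ∧ T.R y y₀ := by
  have hdown : ∀ a ∈ {z | S.R z b}, ∀ w, S.R w a → w ∈ {z | S.R z b} := by
    intro a ha w hwa; exact S.trans _ _ _ hwa ha
  obtain ⟨x, hx, h1, h2⟩ := h.2 {z | S.R z b} hdown b (S.refl b) y hyb
  exact ⟨x, hx, h1, h2⟩

/-- Descend a `T`-pair below `b` to an (equivalent) `S`-pair below `b`. -/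
lemma CLE.descend {S T : Coars r} (h : CLE S T) {b x y : r.carrier}
    (hxy : T.R x y) (hyb : T.R y b) :
    ∃ x₀ y₀, S.R x₀ y₀ ∧ S.R y₀ b ∧ (T.R x₀ x ∧ T.R x x₀) ∧ (T.R y₀ y ∧ T.R y y₀) := by
  obtain ⟨y₀, hy₀b, hy₀y, hyy₀⟩ := h.lift hyb
  have hxy₀ : T.R x y₀ := T.trans _ _ _ hxy hyy₀
  have hdown : ∀ a ∈ {z | S.R z y₀}, ∀ w, S.R w a → w ∈ {z | S.R z y₀} := by
    intro a ha w hwa; exact S.trans _ _ _ hwa ha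
  obtain ⟨x₀, hx₀, h1, h2⟩ := h.2 {z | S.R z y₀} hdown y₀ (S.refl y₀) x hxy₀
  exact ⟨x₀, y₀, hx₀, hy₀b, ⟨h1, h2⟩, hy₀y, hyy₀⟩

/-- The set of pairs of classes appearing in the past of `b`. -/
def pairs (S : Coars r) (b : r.carrier) : Set (Set r.carrier × Set r.carrier) :=
  {p | ∃ x y, S.R x y ∧ S.R y b ∧ p = (cls S x, cls S y)}

lemma pairs_finite (S : Coars r) (b : r.carrier) : (pairs S b).Finite := by
  have h := S.fin b
  apply Set.Finite.subset (h.prod h)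
  rintro ⟨p1, p2⟩ ⟨x, y, hxy, hyb, heq⟩
  obtain ⟨h1, h2⟩ := Prod.mk.injEq .. ▸ heq
  simp only [Set.mem_prod]
  constructor
  · exact ⟨x, S.trans _ _ _ hxy hyb, h1.symm ▸ rfl⟩
  · exact ⟨y, hyb, h2.symm ▸ rfl⟩

/-- The number of class-pairs in the past of `b`. -/
noncomputable def P (S : Coars r) (b : r.carrier) : ℕ := (pairs S b).ncard

end Extremal

namespace Extremal

variable {A : Type u} {C : ConfigFamily A} {r : Realisation C}

section Stable

variable {S T : Coars r} (hST : CLE S T) {b : r.carrier}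

/-- Specification of the descent map on pairs. -/
def Spec (S T : Coars r) (p q : Set r.carrier × Set r.carrier) : Prop :=
  ∃ x y x₀ y₀, p = (cls T x, cls T y) ∧ T.R x y ∧ T.R y b ∧
    q = (cls S x₀, cls S y₀) ∧ S.R x₀ y₀ ∧ S.R y₀ b ∧
    (T.R x₀ x ∧ T.R x x₀) ∧ (T.R y₀ y ∧ T.R y y₀)

include hST in
lemma exists_spec {p : Set r.carrier × Set r.carrier} (hp : p ∈ pairs T b) :
    ∃ q ∈ pairs S b, Spec (b := b) S T p q := by
  obtain ⟨x, y, hxy, hyb, rfl⟩ := hp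
  obtain ⟨x₀, y₀, h1, h2, h3, h4⟩ := hST.descend hxy hyb
  exact ⟨(cls S x₀, cls S y₀), ⟨x₀, y₀, h1, h2, rfl⟩,
    x, y, x₀, y₀, rfl, hxy, hyb, rfl, h1, h2, h3, h4⟩

include hST in
/-- The descent specification determines `p` from `q`. -/
lemma spec_inj {p p' q : Set r.carrier × Set r.carrier}
    (h : Spec (b := b) S T p q) (h' : Spec (b := b) S T p' q) : p = p' := by
  obtain ⟨x, y, x₀, y₀, rfl, hxy, hyb, hq, hx₀y₀, hy₀b, ⟨e1, e2⟩, ⟨e3, e4⟩⟩ := h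
  obtain ⟨x', y', x₀', y₀', rfl, hxy', hyb', hq', hx₀y₀', hy₀b', ⟨f1, f2⟩, ⟨f3, f4⟩⟩ := h'
  rw [hq] at hq'
  obtain ⟨hc1, hc2⟩ := Prod.mk.injEq .. ▸ hq'
  have ex : S.R x₀ x₀' ∧ S.R x₀' x₀ := (cls_eq_iff S).1 hc1
  have ey : S.R y₀ y₀' ∧ S.R y₀' y₀ := (cls_eq_iff S).1 hc2
  have tx : T.R x x' :=
    T.trans _ _ _ e2 (T.trans _ _ _ (hST.1 _ _ ex.1 ex.2) f1)
  have tx' : T.R x' x :=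
    T.trans _ _ _ f2 (T.trans _ _ _ (hST.1 _ _ ex.2 ex.1) e1)
  have ty : T.R y y' :=
    T.trans _ _ _ e4 (T.trans _ _ _ (hST.1 _ _ ey.1 ey.2) f3)
  have ty' : T.R y' y :=
    T.trans _ _ _ f4 (T.trans _ _ _ (hST.1 _ _ ey.2 ey.1) e3)
  rw [Prod.mk.injEq]
  exact ⟨(cls_eq_iff T).2 ⟨tx, tx'⟩, (cls_eq_iff T).2 ⟨ty, ty'⟩⟩

/-- The descent map on pairs, as a function between subtypes. -/
noncomputable def Phi (hST : CLE S T) (b : r.carrier) (p : pairs T b) : pairs S b :=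
  ⟨(exists_spec hST p.2).choose, (exists_spec hST p.2).choose_spec.1⟩

lemma Phi_spec (p : pairs T b) : Spec (b := b) S T p.1 (Phi hST b p).1 :=
  (exists_spec hST p.2).choose_spec.2

include hST in
lemma Phi_injective : Function.Injective (Phi hST b) := by
  intro p p' h
  have h1 := Phi_spec hST p
  have h2 := Phi_spec hST p'
  rw [h] at h1
  exact Subtype.ext (spec_inj hST h1 h2)

include hST in
lemma P_mono : P T b ≤ P S b := by
  have : (pairs S b).Finite := pairs_finite S b
  haveI := this.to_subtype
  have := Nat.card_le_card_of_injective (Phi hST b) (Phi_injective hST)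
  simpa only [P, Nat.card_coe_set_eq] using this

variable (hP : P T b = P S b)

include hST hP in
lemma Phi_surjective : Function.Surjective (Phi hST b) := by
  haveI := (pairs_finite S b).to_subtype
  haveI := (pairs_finite T b).to_subtype
  have hcard : Nat.card (pairs T b) = Nat.card (pairs S b) := by
    simp only [Nat.card_coe_set_eq]; exact hP
  exact ((Nat.bijective_iff_injective_and_card (Phi hST b)).2
    ⟨Phi_injective hST, hcard⟩).2

include hST hP in
/-- Relations below `b` persist upward when `P` is stable. -/
lemma stable_rel : ∀ x y, S.R x y → S.R y b → T.R x y := by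
  intro x y hxy hyb
  have hq : (⟨(cls S x, cls S y), ⟨x, y, hxy, hyb, rfl⟩⟩ : pairs S b) ∈ Set.univ :=
    Set.mem_univ _
  obtain ⟨p, hp⟩ := Phi_surjective hST hP ⟨(cls S x, cls S y), ⟨x, y, hxy, hyb, rfl⟩⟩
  have hs := Phi_spec hST p
  rw [hp] at hs
  obtain ⟨x', y', x₀, y₀, hpe, hxy', hyb', hq', hx₀y₀, hy₀b, ⟨e1, e2⟩, ⟨e3, e4⟩⟩ := hs
  obtain ⟨hc1, hc2⟩ := Prod.mk.injEq .. ▸ hq'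
  -- cls S x = cls S x₀, cls S y = cls S y₀
  have ex : S.R x x₀ ∧ S.R x₀ x := (cls_eq_iff S).1 hc1
  have ey : S.R y y₀ ∧ S.R y₀ y := (cls_eq_iff S).1 hc2
  -- T.R x y : x → x₀ → x' → y' → y₀ → y
  exact T.trans _ _ _ (hST.1 _ _ ex.1 ex.2)
    (T.trans _ _ _ e1
      (T.trans _ _ _ hxy' (T.trans _ _ _ e4 (hST.1 _ _ ey.2 ey.1))))

end Stable

end Extremal

namespace Extremal

variable {A : Type u} {C : ConfigFamily A} {r : Realisation C}

section Stable2

variable {S T : Coars r} {b : r.carrier} (hST : CLE S T) (hP : P T b = P S b)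

/-- Specification for the upward map on pairs. -/
def Spec' (S T : Coars r) (p q : Set r.carrier × Set r.carrier) : Prop :=
  ∃ x y, p = (cls S x, cls S y) ∧ S.R x y ∧ S.R y b ∧ q = (cls T x, cls T y)

include hST in
lemma spec'_fun {p q q' : Set r.carrier × Set r.carrier}
    (h : Spec' (b := b) S T p q) (h' : Spec' (b := b) S T p q') : q = q' := by
  obtain ⟨x, y, hpe, hxy, hyb, rfl⟩ := h
  obtain ⟨x', y', hpe', hxy', hyb', rfl⟩ := h'
  rw [hpe] at hpe'
  obtain ⟨hc1, hc2⟩ := Prod.mk.injEq .. ▸ hpe'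
  have ex := (cls_eq_iff S).1 hc1
  have ey := (cls_eq_iff S).1 hc2
  rw [Prod.mk.injEq]
  exact ⟨(cls_eq_iff T).2 ⟨hST.1 _ _ ex.1 ex.2, hST.1 _ _ ex.2 ex.1⟩,
    (cls_eq_iff T).2 ⟨hST.1 _ _ ey.1 ey.2, hST.1 _ _ ey.2 ey.1⟩⟩

include hST hP in
lemma exists_spec' {p : Set r.carrier × Set r.carrier} (hp : p ∈ pairs S b) :
    ∃ q ∈ pairs T b, Spec' (b := b) S T p q := by
  obtain ⟨x, y, hxy, hyb, rfl⟩ := hp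
  refine ⟨(cls T x, cls T y), ⟨x, y, stable_rel hST hP x y hxy hyb,
    stable_rel hST hP y b hyb (S.refl b), rfl⟩, x, y, rfl, hxy, hyb, rfl⟩

/-- The forward map on pairs. -/
noncomputable def Psi (p : pairs S b) : pairs T b :=
  ⟨(exists_spec' hST hP p.2).choose, (exists_spec' hST hP p.2).choose_spec.1⟩

lemma Psi_spec (p : pairs S b) : Spec' (b := b) S T p.1 (Psi hST hP p).1 :=
  (exists_spec' hST hP p.2).choose_spec.2

include hST hP in
lemma Psi_surjective : Function.Surjective (Psi hST hP) := by
  rintro ⟨q, hq⟩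
  obtain ⟨u, v, huv, hvb, rfl⟩ := hq
  obtain ⟨u₀, v₀, h1, h2, ⟨e1, e2⟩, ⟨e3, e4⟩⟩ := hST.descend huv hvb
  have hp : (cls S u₀, cls S v₀) ∈ pairs S b := ⟨u₀, v₀, h1, h2, rfl⟩
  refine ⟨⟨_, hp⟩, Subtype.ext ?_⟩
  have hs := Psi_spec hST hP ⟨_, hp⟩
  have : Spec' (b := b) S T (cls S u₀, cls S v₀) (cls T u, cls T v) := by
    refine ⟨u₀, v₀, rfl, h1, h2, ?_⟩
    rw [Prod.mk.injEq]
    exact ⟨((cls_eq_iff T).2 ⟨e1, e2⟩).symm, ((cls_eq_iff T).2 ⟨e3, e4⟩).symm⟩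
  exact spec'_fun hST hs this

include hST hP in
lemma Psi_injective : Function.Injective (Psi hST hP) := by
  haveI := (pairs_finite S b).to_subtype
  haveI := (pairs_finite T b).to_subtype
  have hcard : Nat.card (pairs T b) = Nat.card (pairs S b) := by
    simp only [Nat.card_coe_set_eq]; exact hP
  have hbij : Function.Bijective (Psi hST hP) := by
    rw [Nat.bijective_iff_surjective_and_card]
    exact ⟨Psi_surjective hST hP, hcard.symm⟩
  exact hbij.1

include hST hP in
/-- Classes below `b` stay separated when `P` is stable. -/
lemma stable_eq : ∀ x y, S.R x b → S.R y b → T.R x y → T.R y x → S.R x y ∧ S.R y x := by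
  intro x y hxb hyb htxy htyx
  have hp1 : (cls S x, cls S x) ∈ pairs S b := ⟨x, x, S.refl x, hxb, rfl⟩
  have hp2 : (cls S y, cls S y) ∈ pairs S b := ⟨y, y, S.refl y, hyb, rfl⟩
  have hs1 := Psi_spec hST hP ⟨_, hp1⟩
  have hs2 := Psi_spec hST hP ⟨_, hp2⟩
  have e1 : (Psi hST hP ⟨_, hp1⟩).1 = (cls T x, cls T x) :=
    spec'_fun hST hs1 ⟨x, x, rfl, S.refl x, hxb, rfl⟩
  have e2 : (Psi hST hP ⟨_, hp2⟩).1 = (cls T y, cls T y) :=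
    spec'_fun hST hs2 ⟨y, y, rfl, S.refl y, hyb, rfl⟩
  have hcxy : cls T x = cls T y := (cls_eq_iff T).2 ⟨htxy, htyx⟩
  have : Psi hST hP ⟨_, hp1⟩ = Psi hST hP ⟨_, hp2⟩ := by
    apply Subtype.ext; rw [e1, e2, hcxy]
  have := Psi_injective hST hP this
  have hcls : cls S x = cls S y := (congrArg Prod.fst (Subtype.ext_iff.1 this))
  exact (cls_eq_iff S).1 hcls

include hST hP in
/-- `P` stability propagates to all elements below `b`. -/
lemma stable_P : ∀ a, S.R a b → P T a = P S a := by
  intro a hab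
  refine le_antisymm (P_mono hST) ?_
  -- injection pairs S a → pairs T a
  haveI := (pairs_finite T a).to_subtype
  have hex : ∀ p : pairs S a, ∃ q ∈ pairs T a, Spec' (b := a) S T p.1 q := by
    rintro ⟨p, x, y, hxy, hya, rfl⟩
    have hyb : S.R y b := S.trans _ _ _ hya hab
    refine ⟨(cls T x, cls T y), ⟨x, y, stable_rel hST hP x y hxy hyb,
      stable_rel hST hP y a hya hab, rfl⟩, x, y, rfl, hxy, hya, rfl⟩
  classical
  set f : pairs S a → pairs T a := fun p => ⟨(hex p).choose, (hex p).choose_spec.1⟩ with hf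
  have hfspec : ∀ p : pairs S a, Spec' (b := a) S T p.1 (f p).1 :=
    fun p => (hex p).choose_spec.2
  have hinj : Function.Injective f := by
    intro p p' h
    obtain ⟨x, y, hpe, hxy, hya, hqe⟩ := hfspec p
    obtain ⟨x', y', hpe', hxy', hya', hqe'⟩ := hfspec p'
    rw [h] at hqe
    rw [hqe'] at hqe
    obtain ⟨hc1, hc2⟩ := Prod.mk.injEq .. ▸ hqe
    have etx := (cls_eq_iff T).1 hc1.symm
    have ety := (cls_eq_iff T).1 hc2.symm
    have hxb : S.R x b := S.trans _ _ _ (S.trans _ _ _ hxy hya) hab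
    have hx'b : S.R x' b := S.trans _ _ _ (S.trans _ _ _ hxy' hya') hab
    have hyb : S.R y b := S.trans _ _ _ hya hab
    have hy'b : S.R y' b := S.trans _ _ _ hya' hab
    have esx := stable_eq hST hP x x' hxb hx'b etx.1 etx.2
    have esy := stable_eq hST hP y y' hyb hy'b ety.1 ety.2
    apply Subtype.ext
    rw [hpe, hpe', Prod.mk.injEq]
    exact ⟨(cls_eq_iff S).2 esx, (cls_eq_iff S).2 esy⟩
  have := Nat.card_le_card_of_injective f hinj
  simpa only [P, Nat.card_coe_set_eq] using this

end Stable2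

end Extremal

namespace Extremal

variable {A : Type u} {C : ConfigFamily A} {r : Realisation C}

/-- Factoring finiteness of images. -/
lemma image_finite_of_factor {α : Type*} {β : Type*} {γ : Type*} {s : Set α}
    {f : α → β} {g : α → γ} (hf : (f '' s).Finite)
    (h : ∀ x ∈ s, ∀ y ∈ s, f x = f y → g x = g y) : (g '' s).Finite := by
  classical
  rcases s.eq_empty_or_nonempty with rfl | ⟨x₀, hx₀⟩
  · simp
  · have : g '' s ⊆ (fun bb => if hb : ∃ x ∈ s, f x = bb then g hb.choose else g x₀) '' (f '' s) := by
      rintro - ⟨x, hx, rfl⟩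
      refine ⟨f x, ⟨x, hx, rfl⟩, ?_⟩
      have hb : ∃ y ∈ s, f y = f x := ⟨x, hx, rfl⟩
      simp only [dif_pos hb]
      exact h _ hb.choose_spec.1 _ hx hb.choose_spec.2
    exact (hf.image _).subset this

section Chain

variable {c : Set (Coars r)} (hc : IsChain CLE c) (hne : c.Nonempty)

/-- `S` attains the minimal pair-count at `b` within the chain. -/
def Mn (c : Set (Coars r)) (S : Coars r) (b : r.carrier) : Prop :=
  S ∈ c ∧ ∀ T ∈ c, CLE S T → P T b = P S b

include hc in
lemma ub_pair {S T : Coars r} (hS : S ∈ c) (hT : T ∈ c) :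
    ∃ U ∈ c, CLE S U ∧ CLE T U := by
  rcases eq_or_ne S T with rfl | hne'
  · exact ⟨S, hS, CLE.refl S, CLE.refl S⟩
  · rcases hc hS hT hne' with h | h
    · exact ⟨T, hT, h, CLE.refl T⟩
    · exact ⟨S, hS, CLE.refl S, h⟩

include hc hne in
lemma ub_finite {s : Set (Coars r)} (hfin : s.Finite) (hsub : s ⊆ c) :
    ∃ U ∈ c, ∀ S ∈ s, CLE S U := by
  revert hsub
  refine Set.Finite.induction_on
    (motive := fun s _ => s ⊆ c → ∃ U ∈ c, ∀ S ∈ s, CLE S U) s hfin ?_ ?_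
  · exact fun _ => ⟨hne.choose, hne.choose_spec, fun S hS => absurd hS (Set.notMem_empty S)⟩
  · intro a s' ha hs' ih hsub
    obtain ⟨U, hU, hUub⟩ := ih (fun x hx => hsub (Set.mem_insert_of_mem a hx))
    obtain ⟨V, hV, h1, h2⟩ := ub_pair hc (hsub (Set.mem_insert a s')) hU
    exact ⟨V, hV, fun S hS => by
      rcases hS with rfl | hS
      · exact h1
      · exact CLE.trans (hUub S hS) h2⟩

include hne in
lemma mn_exists (b : r.carrier) : ∃ S, Mn c S b := by
  have hNne : {n | ∃ S ∈ c, P S b = n}.Nonempty := ⟨P hne.choose b, hne.choose, hne.choose_spec, rfl⟩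
  obtain ⟨S, hSc, hSP⟩ := Nat.sInf_mem hNne
  refine ⟨S, hSc, fun T hT hST => ?_⟩
  refine le_antisymm (P_mono hST) ?_
  rw [hSP]
  exact Nat.sInf_le ⟨T, hT, rfl⟩

lemma mn_up {S T : Coars r} {b : r.carrier} (hS : Mn c S b) (hT : T ∈ c) (hST : CLE S T) :
    Mn c T b :=
  ⟨hT, fun U hU hTU => by
    rw [hS.2 T hT hST, hS.2 U hU (CLE.trans hST hTU)]⟩

lemma mn_below {S : Coars r} {a b : r.carrier} (hS : Mn c S b) (hab : S.R a b) :
    Mn c S a :=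
  ⟨hS.1, fun T hT hST => stable_P hST (hS.2 T hT hST) a hab⟩

lemma mn_rel {S T : Coars r} {b x y : r.carrier} (hS : Mn c S b) (hT : T ∈ c)
    (hST : CLE S T) (hxy : S.R x y) (hyb : S.R y b) : T.R x y :=
  stable_rel hST (hS.2 T hT hST) x y hxy hyb

lemma mn_sep {S T : Coars r} {b x y : r.carrier} (hS : Mn c S b) (hT : T ∈ c)
    (hST : CLE S T) (hxb : S.R x b) (hyb : S.R y b) (h1 : T.R x y) (h2 : T.R y x) :
    S.R x y ∧ S.R y x :=
  stable_eq hST (hS.2 T hT hST) x y hxb hyb h1 h2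

/-- The limit relation of the chain. -/
def limR (c : Set (Coars r)) (a b : r.carrier) : Prop :=
  ∃ S, Mn c S b ∧ S.R a b

include hne in
lemma lim_refl (b : r.carrier) : limR c b b := by
  obtain ⟨S, hS⟩ := mn_exists hne b
  exact ⟨S, hS, S.refl b⟩

include hc in
lemma lim_trans (a b d : r.carrier) (h1 : limR c a b) (h2 : limR c b d) : limR c a d := by
  obtain ⟨S1, hS1, hab⟩ := h1
  obtain ⟨S2, hS2, hbd⟩ := h2
  obtain ⟨U, hU, e1, e2⟩ := ub_pair hc hS1.1 hS2.1
  have hUab : U.R a b := mn_rel hS1 hU e1 hab (S1.refl b)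
  have hUbd : U.R b d := mn_rel hS2 hU e2 hbd (S2.refl d)
  exact ⟨U, mn_up hS2 hU e2, U.trans _ _ _ hUab hUbd⟩

include hc in
lemma lim_rho (a b : r.carrier) (h1 : limR c a b) (h2 : limR c b a) : r.ρ a = r.ρ b := by
  obtain ⟨S1, hS1, hab⟩ := h1
  obtain ⟨S2, hS2, hba⟩ := h2
  obtain ⟨U, hU, e1, e2⟩ := ub_pair hc hS1.1 hS2.1
  exact U.rho a b (mn_rel hS1 hU e1 hab (S1.refl b)) (mn_rel hS2 hU e2 hba (S2.refl a))

include hc in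
/-- Descend a limit-predecessor of `b` to an `S`-predecessor, when `S` is minimal at `b`. -/
lemma lim_descend {S : Coars r} {a b : r.carrier} (hS : Mn c S b) (h : limR c a b) :
    ∃ a₀, S.R a₀ b ∧ r.ρ a₀ = r.ρ a ∧ limR c a₀ a ∧ limR c a a₀ := by
  obtain ⟨T, hT, hab⟩ := h
  obtain ⟨U, hU, eSU, eTU⟩ := ub_pair hc hS.1 hT.1
  have hUab : U.R a b := mn_rel hT hU eTU hab (T.refl b)
  have hMnUb : Mn c U b := mn_up hS hU eSU
  obtain ⟨a₀, b₀, h1, h2, ⟨e1, e2⟩, ⟨e3, e4⟩⟩ := eSU.descend hUab (U.refl b)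
  -- b₀ equiv b in U, S.R b₀ b?? we get S.R a₀ b₀ and S.R b₀ b
  have hSa₀b : S.R a₀ b := S.trans _ _ _ h1 h2
  have hMnUa : Mn c U a := mn_below hMnUb hUab
  have hMnUa₀ : Mn c U a₀ := mn_below hMnUa e1
  exact ⟨a₀, hSa₀b, U.rho a₀ a e1 e2, ⟨U, hMnUa, e1⟩, ⟨U, hMnUa₀, e2⟩⟩

lemma lim_of_equiv_S {S : Coars r} {b x y : r.carrier} (hS : Mn c S b)
    (hx : S.R x b) (hy : S.R y b) (hxy : S.R x y) (hyx : S.R y x) :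
    limR c x y ∧ limR c y x :=
  ⟨⟨S, mn_below hS hy, hxy⟩, ⟨S, mn_below hS hx, hyx⟩⟩

include hc in
lemma lim_cls_eq {x y : r.carrier} (h1 : limR c x y) (h2 : limR c y x) :
    {z | limR c x z ∧ limR c z x} = {z | limR c y z ∧ limR c z y} := by
  ext z
  constructor
  · rintro ⟨u1, u2⟩
    exact ⟨lim_trans hc _ _ _ h2 u1, lim_trans hc _ _ _ u2 h1⟩
  · rintro ⟨u1, u2⟩
    exact ⟨lim_trans hc _ _ _ h1 u1, lim_trans hc _ _ _ u2 h2⟩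

include hc hne in
lemma lim_fin (b : r.carrier) :
    ((fun x => {y | limR c x y ∧ limR c y x}) '' {a | limR c a b}).Finite := by
  obtain ⟨S, hS⟩ := mn_exists hne b
  have himg : (fun x => {y | limR c x y ∧ limR c y x}) '' {a | limR c a b}
      = (fun x => {y | limR c x y ∧ limR c y x}) '' {a | S.R a b} := by
    apply Set.Subset.antisymm
    · rintro - ⟨a, ha, rfl⟩
      obtain ⟨a₀, h1, _, h3, h4⟩ := lim_descend hc hS ha
      exact ⟨a₀, h1, (lim_cls_eq hc h3 h4)⟩
    · rintro - ⟨a, ha, rfl⟩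
      exact ⟨a, ⟨S, hS, ha⟩, rfl⟩
  rw [himg]
  apply image_finite_of_factor (f := fun x => cls S x) (S.fin b)
  intro x hx y hy hcl
  have hxy := (cls_eq_iff S).1 hcl
  obtain ⟨u1, u2⟩ := lim_of_equiv_S hS hx hy hxy.1 hxy.2
  exact lim_cls_eq hc u1 u2

include hc hne in
lemma lim_image_eq {S : Coars r} {a : r.carrier} (hS : Mn c S a) :
    r.ρ '' {x | limR c x a} = r.ρ '' {x | S.R x a} := by
  apply Set.Subset.antisymm
  · rintro - ⟨x, hx, rfl⟩
    obtain ⟨x₀, h1, h2, _, _⟩ := lim_descend hc hS hx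
    exact ⟨x₀, h1, h2⟩
  · rintro - ⟨x, hx, rfl⟩
    exact ⟨x, ⟨S, hS, hx⟩, rfl⟩

include hc hne in
lemma lim_real (Y : Set r.carrier) (hY : ∀ a ∈ Y, ∀ b, limR c b a → b ∈ Y) :
    r.ρ '' Y ∈ C.F := by
  classical
  set X : Set (Set A) := (fun a => r.ρ '' {x | limR c x a}) '' Y with hXdef
  have hXF : X ⊆ C.F := by
    rintro - ⟨a, ha, rfl⟩
    obtain ⟨S, hS⟩ := mn_exists hne a
    show r.ρ '' {x | limR c x a} ∈ C.F
    rw [lim_image_eq hc hne hS]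
    exact S.real _ (fun u hu v hv => S.trans _ _ _ hv hu)
  have hcompat : ∀ Yf ⊆ X, Yf.Finite → ∃ z ∈ C.F, ∀ y ∈ Yf, y ⊆ z := by
    intro Yf hYfX hYffin
    rcases Yf.eq_empty_or_nonempty with rfl | hYfne
    · exact ⟨C.nonempty.choose, C.nonempty.choose_spec, fun y hy => absurd hy (Set.notMem_empty y)⟩
    haveI := hYffin.to_subtype
    have hmem : ∀ z : ↥Yf, ∃ a ∈ Y, r.ρ '' {x | limR c x a} = z.1 := fun z => hYfX z.2
    set g : ↥Yf → r.carrier := fun z => (hmem z).choose with hg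
    have hgY : ∀ z, g z ∈ Y := fun z => (hmem z).choose_spec.1
    have hgeq : ∀ z : ↥Yf, r.ρ '' {x | limR c x (g z)} = z.1 := fun z => (hmem z).choose_spec.2
    set sz : ↥Yf → Coars r := fun z => (mn_exists hne (g z)).choose with hsz
    have hszm : ∀ z, Mn c (sz z) (g z) := fun z => (mn_exists hne (g z)).choose_spec
    obtain ⟨U, hU, hUub⟩ := ub_finite hc hne (Set.finite_range sz)
      (by rintro - ⟨z, rfl⟩; exact (hszm z).1)
    have hUmn : ∀ z, Mn c U (g z) := fun z => mn_up (hszm z) hU (hUub _ ⟨z, rfl⟩)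
    set W : Set r.carrier := {x | ∃ z : ↥Yf, U.R x (g z)} with hW
    have hWdown : ∀ u ∈ W, ∀ v, U.R v u → v ∈ W := by
      rintro u ⟨z, hz⟩ v hv
      exact ⟨z, U.trans _ _ _ hv hz⟩
    refine ⟨r.ρ '' W, U.real W hWdown, ?_⟩
    intro y hy
    have heq : r.ρ '' {x | limR c x (g ⟨y, hy⟩)} = y := hgeq ⟨y, hy⟩
    rw [← heq, lim_image_eq hc hne (hUmn ⟨y, hy⟩)]
    rintro - ⟨x, hx, rfl⟩
    exact ⟨x, ⟨⟨y, hy⟩, hx⟩, rfl⟩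
  have hsU := C.unionClosed X hXF hcompat
  have : ⋃₀ X = r.ρ '' Y := by
    apply Set.Subset.antisymm
    · rintro u ⟨-, ⟨a, ha, rfl⟩, ⟨x, hx, rfl⟩⟩
      exact ⟨x, hY a ha x hx, rfl⟩
    · rintro - ⟨x, hx, rfl⟩
      exact ⟨r.ρ '' {u | limR c u x}, ⟨x, hx, rfl⟩, ⟨x, lim_refl hne x, rfl⟩⟩
  rwa [this] at hsU

include hc hne in
lemma lim_pres (X : Set r.carrier) (hX : r.IsDown X) :
    ∀ a ∈ X, ∀ b, limR c b a → ∃ x ∈ X, limR c x b ∧ limR c b x := by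
  intro a ha b hba
  obtain ⟨T, hT, hTba⟩ := hba
  obtain ⟨x, hx, e1, e2⟩ := T.pres X hX a ha b hTba
  have hMnTb : Mn c T b := mn_below hT hTba
  have hMnTx : Mn c T x := mn_below hMnTb e1
  exact ⟨x, hx, ⟨T, hMnTb, e1⟩, ⟨T, hMnTx, e2⟩⟩

/-- The limit coarsening of a nonempty chain. -/
noncomputable def limCoars (hc : IsChain CLE c) (hne : c.Nonempty) : Coars r where
  R := limR c
  refl := lim_refl hne
  trans := lim_trans hc
  rho := lim_rho hc
  fin := lim_fin hc hne
  pres := lim_pres hc hne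
  real := lim_real hc hne

include hc hne in
lemma le_limCoars {S₀ : Coars r} (hS₀ : S₀ ∈ c) : CLE S₀ (limCoars hc hne) := by
  constructor
  · intro a b hab hba
    obtain ⟨S, hS⟩ := mn_exists hne b
    obtain ⟨U, hU, e1, e2⟩ := ub_pair hc hS₀ hS.1
    exact ⟨U, mn_up hS hU e2, e1.1 a b hab hba⟩
  · intro X hX a ha b hba
    obtain ⟨T, hT, hTba⟩ := hba
    obtain ⟨U, hU, e1, e2⟩ := ub_pair hc hS₀ hT.1
    have hUba : U.R b a := mn_rel hT hU e2 hTba (T.refl a)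
    have hMnUa : Mn c U a := mn_up hT hU e2
    obtain ⟨x, hx, f1, f2⟩ := e1.2 X hX a ha b hUba
    have hMnUb : Mn c U b := mn_below hMnUa hUba
    have hMnUx : Mn c U x := mn_below hMnUb f1
    exact ⟨x, hx, ⟨U, hMnUb, f1⟩, ⟨U, hMnUx, f2⟩⟩

end Chain

end Extremal

namespace Extremal

variable {A : Type u} {C : ConfigFamily A}

/-- The trivial coarsening. -/
def baseCoars (r : Realisation C) : Coars r where
  R := r.le
  refl := r.le_refl
  trans := r.le_trans
  rho := fun a b h1 h2 => by rw [r.le_antisymm a b h1 h2]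
  fin := fun b => by
    have heq : (fun x => {y | r.le x y ∧ r.le y x}) '' {a | r.le a b}
        = (fun x => ({x} : Set r.carrier)) '' {a | r.le a b} := by
      apply Set.image_congr
      intro x _
      ext y
      simp only [Set.mem_setOf_eq, Set.mem_singleton_iff]
      exact ⟨fun h => (r.le_antisymm y x h.2 h.1), fun h => by
        cases h; exact ⟨r.le_refl _, r.le_refl _⟩⟩
    rw [heq]
    exact (r.finPast b).image _
  pres := fun X hX a ha b hba => ⟨b, hX a ha b hba, r.le_refl b, r.le_refl b⟩
  real := r.real

variable {r : Realisation C}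

lemma exists_max (r : Realisation C) : ∃ M : Coars r, ∀ S, CLE M S → CLE S M := by
  apply exists_maximal_of_chains_bounded (r := CLE)
  · intro c hchain
    rcases c.eq_empty_or_nonempty with rfl | hne
    · exact ⟨baseCoars r, fun S hS => absurd hS (Set.notMem_empty S)⟩
    · exact ⟨limCoars hchain hne, fun S hS => le_limCoars hchain hne hS⟩
  · exact fun h1 h2 => CLE.trans h1 h2

/-- The setoid of a coarsening. -/
def msetoid (M : Coars r) : Setoid r.carrier :=
  ⟨fun a b => M.R a b ∧ M.R b a,
    ⟨fun a => ⟨M.refl a, M.refl a⟩, fun h => ⟨h.2, h.1⟩,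
      fun h1 h2 => ⟨M.trans _ _ _ h1.1 h2.1, M.trans _ _ _ h2.2 h1.2⟩⟩⟩

/-- The quotient order. -/
def qrel (M : Coars r) : Quotient (msetoid M) → Quotient (msetoid M) → Prop :=
  Quotient.lift₂ (fun a b => M.R a b) (by
    intro a b a' b' ha hb
    apply propext
    constructor
    · intro h
      exact M.trans _ _ _ ha.2 (M.trans _ _ _ h hb.1)
    · intro h
      exact M.trans _ _ _ ha.1 (M.trans _ _ _ h hb.2))

lemma qrel_mk (M : Coars r) (a b : r.carrier) :
    qrel M ⟦a⟧ ⟦b⟧ = M.R a b := rfl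

/-- The quotient realisation of a coarsening. -/
def qReal (M : Coars r) : Realisation C where
  carrier := Quotient (msetoid M)
  le := qrel M
  le_refl := by
    intro q
    induction q using Quotient.ind with
    | _ a => exact M.refl a
  le_trans := by
    intro q1 q2 q3
    induction q1 using Quotient.ind with
    | _ a =>
    induction q2 using Quotient.ind with
    | _ b =>
    induction q3 using Quotient.ind with
    | _ c => exact M.trans a b c
  le_antisymm := by
    intro q1 q2
    induction q1 using Quotient.ind with
    | _ a =>
    induction q2 using Quotient.ind with
    | _ b =>
    intro h1 h2
    exact Quotient.sound (show M.R a b ∧ M.R b a from ⟨h1, h2⟩)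
  finPast := by
    intro e
    induction e using Quotient.ind with
    | _ b =>
      have heq : {e' | qrel M e' ⟦b⟧} = (fun a => (⟦a⟧ : Quotient (msetoid M))) '' {a | M.R a b} := by
        ext q
        constructor
        · intro hq
          obtain ⟨a, rfl⟩ := Quotient.exists_rep q
          exact ⟨a, hq, rfl⟩
        · rintro ⟨a, ha, rfl⟩
          exact ha
      rw [heq]
      apply Set.Finite.of_finite_image (f := Quotient.lift (cls M)
        (fun a b h => (cls_eq_iff M).2 (show M.R a b ∧ M.R b a from h)))
      · rw [Set.image_image]
        exact M.fin b
      · rintro - ⟨a, _, rfl⟩ - ⟨a', _, rfl⟩ hcl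
        have hcc : cls M a = cls M a' := hcl
        exact Quotient.sound (show M.R a a' ∧ M.R a' a from (cls_eq_iff M).1 hcc)
  ρ := Quotient.lift r.ρ (fun a b h => M.rho a b
    (show M.R a b ∧ M.R b a from h).1 (show M.R a b ∧ M.R b a from h).2)
  real := by
    intro x hx
    set Y : Set r.carrier := {a | ⟦a⟧ ∈ x} with hYdef
    have hYsat : ∀ a ∈ Y, ∀ b, M.R b a → b ∈ Y := by
      intro a ha b hba
      exact hx ⟦a⟧ ha ⟦b⟧ hba
    have := M.real Y hYsat
    have himg : Quotient.lift r.ρ (fun a b h => M.rho a b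
        (show M.R a b ∧ M.R b a from h).1 (show M.R a b ∧ M.R b a from h).2) '' x
        = r.ρ '' Y := by
      ext u
      constructor
      · rintro ⟨q, hq, rfl⟩
        obtain ⟨a, rfl⟩ := Quotient.exists_rep q
        exact ⟨a, hq, rfl⟩
      · rintro ⟨a, ha, rfl⟩
        exact ⟨⟦a⟧, ha, rfl⟩
    rwa [himg]

/-- The quotient map as a map of realisations. -/
def qMap (M : Coars r) : RealMap r (qReal M) where
  f := fun a => some ⟦a⟧
  surj := fun q => by
    obtain ⟨a, rfl⟩ := Quotient.exists_rep q
    exact ⟨a, rfl⟩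
  presDown := by
    intro X hX q hq q' hq'
    obtain ⟨a, ha, haq⟩ := hq
    obtain ⟨b, rfl⟩ := Quotient.exists_rep q'
    have hqa : (⟦a⟧ : Quotient (msetoid M)) = q := Option.some.inj haq
    subst hqa
    have hba : M.R b a := hq'
    obtain ⟨x, hx, e1, e2⟩ := M.pres X hX a ha b hba
    exact ⟨x, hx, congrArg some (Quotient.sound (show M.R x b ∧ M.R b x from ⟨e1, e2⟩))⟩
  commutes := by
    intro a b hab
    have : (⟦a⟧ : Quotient (msetoid M)) = b := Option.some.inj hab
    subst this
    rfl

lemma qMap_total (M : Coars r) : (qMap M).IsTotal := fun a => ⟨⟦a⟧, rfl⟩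

lemma mk_down_of_sat (M : Coars r) {X : Set r.carrier}
    (hX : ∀ a ∈ X, ∀ b, M.R b a → b ∈ X) :
    (qReal M).IsDown ((fun a => (⟦a⟧ : Quotient (msetoid M))) '' X) := by
  rintro q ⟨a, ha, rfl⟩ q' hq'
  obtain ⟨b, rfl⟩ := Quotient.exists_rep q'
  exact ⟨b, hX a ha b hq', rfl⟩

end Extremal

namespace Extremal

variable {A : Type u} {C : ConfigFamily A} {r : Realisation C}

theorem qReal_extremal (M : Coars r) (hmax : ∀ S, CLE M S → CLE S M) :
    (qReal M).Extremal := by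
  intro r'' m' htot
  classical
  set h : r.carrier → r''.carrier := fun a => (htot ⟦a⟧).choose with hh
  have hspec : ∀ a, m'.f ⟦a⟧ = some (h a) := fun a => (htot ⟦a⟧).choose_spec
  have hrho : ∀ a, r.ρ a = r''.ρ (h a) := fun a => m'.commutes ⟦a⟧ (h a) (hspec a)
  have hsurj : ∀ z, ∃ a, h a = z := by
    intro z
    obtain ⟨q, hq⟩ := m'.surj z
    obtain ⟨a, rfl⟩ := Quotient.exists_rep q
    exact ⟨a, Option.some.inj ((hspec a).symm.trans hq)⟩
  have himg : ∀ X : Set r.carrier,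
      pimage m'.f ((fun a => (⟦a⟧ : Quotient (msetoid M))) '' X) = h '' X := by
    intro X
    ext z
    constructor
    · rintro ⟨q, ⟨a, ha, rfl⟩, hfz⟩
      exact ⟨a, ha, Option.some.inj ((hspec a).symm.trans hfz)⟩
    · rintro ⟨a, ha, rfl⟩
      exact ⟨⟦a⟧, ⟨a, ha, rfl⟩, hspec a⟩
  -- the pullback coarsening
  set R2 : Coars r := {
    R := fun a b => r''.le (h a) (h b)
    refl := fun a => r''.le_refl _
    trans := fun a b c h1 h2 => r''.le_trans _ _ _ h1 h2
    rho := fun a b h1 h2 => by rw [hrho a, hrho b, r''.le_antisymm _ _ h1 h2]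
    fin := fun b => by
      apply image_finite_of_factor (f := fun x => h x)
      · apply Set.Finite.subset (r''.finPast (h b))
        rintro - ⟨a, ha, rfl⟩; exact ha
      · intro x _ y _ hxy
        have hxy' : h x = h y := hxy
        ext u
        simp only [Set.mem_setOf_eq, hxy']
    pres := fun X hX a ha b hba => by
      have hdq := (qMap M).presDown X hX
      have hdz := m'.presDown _ hdq
      have hpe : pimage (qMap M).f X = (fun a => (⟦a⟧ : Quotient (msetoid M))) '' X := by
        ext q
        constructor
        · rintro ⟨a, ha', hfa⟩
          exact ⟨a, ha', Option.some.inj hfa⟩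
        · rintro ⟨a, ha', rfl⟩
          exact ⟨a, ha', rfl⟩
      rw [hpe] at hdz
      have hdz2 : r''.IsDown (h '' X) := by rw [← himg X]; exact hdz
      have hmem : h b ∈ h '' X := hdz2 (h a) ⟨a, ha, rfl⟩ (h b) hba
      obtain ⟨x, hx, hxb⟩ := hmem
      exact ⟨x, hx, by show r''.le (h x) (h b); rw [hxb]; exact r''.le_refl _,
        by show r''.le (h b) (h x); rw [hxb]; exact r''.le_refl _⟩
    real := fun Y hY => by
      have hDdown : ∀ a ∈ h '' Y, ∀ z, r''.le z a → z ∈ h '' Y := by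
        rintro - ⟨y, hy, rfl⟩ z hz
        obtain ⟨x, rfl⟩ := hsurj z
        exact ⟨x, hY y hy x hz, rfl⟩
      have hreal := r''.real (h '' Y) hDdown
      have heq : r''.ρ '' (h '' Y) = r.ρ '' Y := by
        rw [Set.image_image]
        exact Set.image_congr (fun a _ => (hrho a).symm)
      rwa [heq] at hreal } with hR2
  have hMR2 : CLE M R2 := by
    constructor
    · intro a b hab hba
      have hq : (⟦a⟧ : Quotient (msetoid M)) = ⟦b⟧ :=
        Quotient.sound (show M.R a b ∧ M.R b a from ⟨hab, hba⟩)
      have : h a = h b := by simp only [hh, hq]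
      show r''.le (h a) (h b)
      rw [this]; exact r''.le_refl _
    · intro X hX a ha b hba
      have hdq := mk_down_of_sat M hX
      have hdz := m'.presDown _ hdq
      rw [himg X] at hdz
      have hmem : h b ∈ h '' X := hdz (h a) ⟨a, ha, rfl⟩ (h b) hba
      obtain ⟨x, hx, hxb⟩ := hmem
      refine ⟨x, hx, ?_, ?_⟩
      · show r''.le (h x) (h b); rw [hxb]; exact r''.le_refl _
      · show r''.le (h b) (h x); rw [hxb]; exact r''.le_refl _
  have hR2M : CLE R2 M := hmax R2 hMR2
  have hinj : ∀ (q1 q2 : (qReal M).carrier) z, m'.f q1 = some z → m'.f q2 = some z → q1 = q2 := by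
    intro q1 q2 z h1 h2
    obtain ⟨a1, rfl⟩ := Quotient.exists_rep q1
    obtain ⟨a2, rfl⟩ := Quotient.exists_rep q2
    have e1 : h a1 = z := Option.some.inj ((hspec a1).symm.trans h1)
    have e2 : h a2 = z := Option.some.inj ((hspec a2).symm.trans h2)
    have heq : h a1 = h a2 := e1.trans e2.symm
    have r1 : M.R a1 a2 := hR2M.1 a1 a2
      (show r''.le (h a1) (h a2) by rw [heq]; exact r''.le_refl _)
      (show r''.le (h a2) (h a1) by rw [heq]; exact r''.le_refl _)
    have r2 : M.R a2 a1 := hR2M.1 a2 a1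
      (show r''.le (h a2) (h a1) by rw [heq]; exact r''.le_refl _)
      (show r''.le (h a1) (h a2) by rw [heq]; exact r''.le_refl _)
    exact Quotient.sound (show M.R a1 a2 ∧ M.R a2 a1 from ⟨r1, r2⟩)
  set g : r''.carrier → (qReal M).carrier := fun z => (m'.surj z).choose with hg
  have hgspec : ∀ z, m'.f (g z) = some z := fun z => (m'.surj z).choose_spec
  refine ⟨⟨fun z => some (g z), ?_, ?_, ?_⟩, ?_⟩
  · -- surjectivity of the inverse
    intro q
    obtain ⟨z, hz⟩ := htot q
    have : g z = q := hinj (g z) q z (hgspec z) hz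
    exact ⟨z, congrArg some this⟩
  · -- presDown of the inverse
    intro y hy q hq q' hq'
    obtain ⟨z, hz, hgz⟩ := hq
    have hgz' : g z = q := Option.some.inj hgz
    subst hgz'
    obtain ⟨a, ha⟩ := Quotient.exists_rep (g z)
    obtain ⟨b, rfl⟩ := Quotient.exists_rep q'
    have hba : M.R b a := by
      have : qrel M (⟦b⟧ : Quotient (msetoid M)) ⟦a⟧ := by rw [ha]; exact hq'
      exact this
    have hhaz : h a = z := by
      have h1 : m'.f ⟦a⟧ = some z := by rw [ha]; exact hgspec z
      exact Option.some.inj ((hspec a).symm.trans h1)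
    set X : Set r.carrier := {x | h x ∈ y} with hXdef
    have hXdown : ∀ u ∈ X, ∀ v, R2.R v u → v ∈ X := by
      intro u hu v hv
      exact hy (h u) hu (h v) hv
    have haX : a ∈ X := by
      show h a ∈ y
      rw [hhaz]; exact hz
    obtain ⟨x, hx, e1, e2⟩ := hR2M.2 X hXdown a haX b hba
    have hgx : g (h x) = ⟦x⟧ := hinj (g (h x)) ⟦x⟧ (h x) (hgspec (h x)) (hspec x)
    refine ⟨h x, hx, ?_⟩
    have hxbq : (⟦x⟧ : Quotient (msetoid M)) = ⟦b⟧ :=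
      Quotient.sound (show M.R x b ∧ M.R b x from ⟨e1, e2⟩)
    show some (g (h x)) = some (⟦b⟧ : Quotient (msetoid M))
    rw [hgx, hxbq]
    rfl
  · -- commutes of the inverse
    intro z q hzq
    have : g z = q := Option.some.inj hzq
    subst this
    exact (m'.commutes (g z) z (hgspec z)).symm
  · -- the inverse-graph condition
    intro q z
    constructor
    · intro hqz
      have : g z = q := hinj (g z) q z (hgspec z) hqz
      exact congrArg some this
    · intro hzq
      have : g z = q := Option.some.inj hzq
      rw [← this]
      exact hgspec z

end Extremal

/-- Any realisation can be coarsened to an extremal realisation: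
for any realisation there is an extremal realisation and a total map of
realisations to it. -/
theorem stmt0 {A : Type u} (C : ConfigFamily A) (r : Realisation C) :
    ∃ (r' : Realisation C) (m : RealMap r r'), r'.Extremal ∧ m.IsTotal := by
  obtain ⟨M, hmax⟩ := Extremal.exists_max r
  exact ⟨Extremal.qReal M, Extremal.qMap M, Extremal.qReal_extremal M hmax,
    Extremal.qMap_total M⟩
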